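/- (Telescoping/simulation identity) For any policy π and any bounded function f: S×A→ℝ, f(s_0,π) − J(π) = (1/(1−γ)) E_{(s,a)∼d_π}[f(s,a) − (T^π f)(s,a)], where d_π is the normalized discounted state-action occupancy of π started from s_0. -/

import Mathlib

open Finset

/-- Distribution of the state-action pair at time `t` under policy `π` started at `s0`. -/
def stepDist {S A : Type*} [Fintype S] [Fintype A] [DecidableEq S]
    (P : S → A → S → ℝ) (π : S → A → ℝ) (s0 : S) : ℕ → S × A → ℝ
  | 0 => fun p => (if p.1 = s0 then (1 : ℝ) else 0) * π p.1 p.2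
  | (t + 1) => fun p => ∑ q : S × A, stepDist P π s0 t q * P q.1 q.2 p.1 * π p.1 p.2

section Aux
variable {S A : Type*} [Fintype S] [Fintype A] [DecidableEq S]
  (P : S → A → S → ℝ) (π : S → A → ℝ) (s0 : S)

lemma stepDist_nonneg (hP0 : ∀ s a s', 0 ≤ P s a s') (hπ0 : ∀ s a, 0 ≤ π s a) :
    ∀ t p, 0 ≤ stepDist P π s0 t p
  | 0, p => by
      simp only [stepDist]
      apply mul_nonneg _ (hπ0 _ _)
      split <;> norm_num
  | (t + 1), p => by
      simp only [stepDist]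
      refine Finset.sum_nonneg fun q _ => ?_
      exact mul_nonneg (mul_nonneg (stepDist_nonneg hP0 hπ0 t q) (hP0 _ _ _)) (hπ0 _ _)

lemma stepDist_sum_one (hP1 : ∀ s a, ∑ s', P s a s' = 1) (hπ1 : ∀ s, ∑ a, π s a = 1) :
    ∀ t, ∑ p : S × A, stepDist P π s0 t p = 1
  | 0 => by
      simp only [stepDist]
      rw [Fintype.sum_prod_type]
      have h : ∀ s : S, ∑ a : A, (if s = s0 then (1:ℝ) else 0) * π s a
          = if s = s0 then 1 else 0 := by
        intro s; rw [← Finset.mul_sum, hπ1, mul_one]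
      simp [h, hπ1]
  | (t + 1) => by
      simp only [stepDist]
      rw [Finset.sum_comm]
      have h : ∀ q : S × A, ∑ p : S × A, stepDist P π s0 t q * P q.1 q.2 p.1 * π p.1 p.2
          = stepDist P π s0 t q := by
        intro q
        rw [Fintype.sum_prod_type]
        have h2 : ∀ s' : S, ∑ a' : A, stepDist P π s0 t q * P q.1 q.2 s' * π s' a'
            = stepDist P π s0 t q * P q.1 q.2 s' := by
          intro s'; rw [← Finset.mul_sum, hπ1, mul_one]
        simp only [h2]
        rw [← Finset.mul_sum, hP1, mul_one]
      simp only [h]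
      exact stepDist_sum_one hP1 hπ1 t

lemma stepDist_le_one (hP0 : ∀ s a s', 0 ≤ P s a s') (hπ0 : ∀ s a, 0 ≤ π s a)
    (hP1 : ∀ s a, ∑ s', P s a s' = 1) (hπ1 : ∀ s, ∑ a, π s a = 1) (t : ℕ) (p : S × A) :
    stepDist P π s0 t p ≤ 1 := by
  calc stepDist P π s0 t p ≤ ∑ q : S × A, stepDist P π s0 t q :=
        Finset.single_le_sum (fun q _ => stepDist_nonneg P π s0 hP0 hπ0 t q) (Finset.mem_univ p)
    _ = 1 := stepDist_sum_one P π s0 hP1 hπ1 t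

lemma weighted_abs_le (hP0 : ∀ s a s', 0 ≤ P s a s') (hπ0 : ∀ s a, 0 ≤ π s a)
    (hP1 : ∀ s a, ∑ s', P s a s' = 1) (hπ1 : ∀ s, ∑ a, π s a = 1) (t : ℕ)
    (g : S × A → ℝ) (C : ℝ) (hg : ∀ p, |g p| ≤ C) :
    |∑ p : S × A, stepDist P π s0 t p * g p| ≤ C := by
  calc |∑ p : S × A, stepDist P π s0 t p * g p|
      ≤ ∑ p : S × A, |stepDist P π s0 t p * g p| := Finset.abs_sum_le_sum_abs _ _
    _ ≤ ∑ p : S × A, stepDist P π s0 t p * C := by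
        refine Finset.sum_le_sum fun p _ => ?_
        rw [abs_mul, abs_of_nonneg (stepDist_nonneg P π s0 hP0 hπ0 t p)]
        exact mul_le_mul_of_nonneg_left (hg p) (stepDist_nonneg P π s0 hP0 hπ0 t p)
    _ = C := by rw [← Finset.sum_mul, stepDist_sum_one P π s0 hP1 hπ1, one_mul]

end Aux

lemma summable_geom_mul (γ : ℝ) (hγ0 : 0 ≤ γ) (hγ1 : γ < 1) (u : ℕ → ℝ) (C : ℝ)
    (hu : ∀ t, |u t| ≤ C) : Summable (fun t => γ ^ t * u t) := by
  apply Summable.of_norm_bounded (g := fun t => γ ^ t * C)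
  · exact (summable_geometric_of_lt_one hγ0 hγ1).mul_right C
  · intro t
    rw [Real.norm_eq_abs, abs_mul, abs_pow, abs_of_nonneg hγ0]
    exact mul_le_mul_of_nonneg_left (hu t) (pow_nonneg hγ0 t)

theorem telescoping_identity
    {S A : Type*} [Fintype S] [Fintype A] [DecidableEq S]
    (P : S → A → S → ℝ) (hP0 : ∀ s a s', 0 ≤ P s a s') (hP1 : ∀ s a, ∑ s', P s a s' = 1)
    (R : S → A → ℝ) (Rmax : ℝ) (hR : ∀ s a, R s a ∈ Set.Icc (0 : ℝ) Rmax)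
    (γ : ℝ) (hγ0 : 0 ≤ γ) (hγ1 : γ < 1) (s0 : S)
    (π : S → A → ℝ) (hπ0 : ∀ s a, 0 ≤ π s a) (hπ1 : ∀ s, ∑ a, π s a = 1)
    (f : S → A → ℝ) (B : ℝ) (hf : ∀ s a, |f s a| ≤ B)
    (J : ℝ) (hJ : J = ∑' t : ℕ, γ ^ t * ∑ p : S × A, stepDist P π s0 t p * R p.1 p.2)
    (dπ : S × A → ℝ)
    (hd : ∀ p, dπ p = (1 - γ) * ∑' t : ℕ, γ ^ t * stepDist P π s0 t p) :
    (∑ a, π s0 a * f s0 a) - J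
      = (1 / (1 - γ)) * ∑ p : S × A, dπ p *
          (f p.1 p.2 - (R p.1 p.2 + γ * ∑ s', P p.1 p.2 s' * ∑ a', π s' a' * f s' a')) := by
  -- nonemptiness and bound nonnegativity
  have hA : Nonempty A := by
    by_contra h
    rw [not_nonempty_iff] at h
    have := hπ1 s0
    simp at this
  obtain ⟨a0⟩ := hA
  have hB : 0 ≤ B := le_trans (abs_nonneg _) (hf s0 a0)
  have hRmax : 0 ≤ Rmax := le_trans (hR s0 a0).1 (hR s0 a0).2
  -- abbreviations
  set d : ℕ → S × A → ℝ := stepDist P π s0 with hdef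
  set Pf : S × A → ℝ := fun p => ∑ s', P p.1 p.2 s' * ∑ a', π s' a' * f s' a' with hPf
  set X : S × A → ℝ := fun p => f p.1 p.2 - (R p.1 p.2 + γ * Pf p) with hX
  set F : ℕ → ℝ := fun t => ∑ p : S × A, d t p * f p.1 p.2 with hF
  set RT : ℕ → ℝ := fun t => ∑ p : S × A, d t p * R p.1 p.2 with hRT
  -- bounds
  have hfπ : ∀ s', |∑ a', π s' a' * f s' a'| ≤ B := by
    intro s'
    calc |∑ a', π s' a' * f s' a'| ≤ ∑ a', |π s' a' * f s' a'| := Finset.abs_sum_le_sum_abs _ _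
      _ ≤ ∑ a', π s' a' * B := by
          refine Finset.sum_le_sum fun a' _ => ?_
          rw [abs_mul, abs_of_nonneg (hπ0 s' a')]
          exact mul_le_mul_of_nonneg_left (hf s' a') (hπ0 s' a')
      _ = B := by rw [← Finset.sum_mul, hπ1, one_mul]
  have hPfB : ∀ p, |Pf p| ≤ B := by
    intro p
    calc |Pf p| ≤ ∑ s', |P p.1 p.2 s' * ∑ a', π s' a' * f s' a'| := Finset.abs_sum_le_sum_abs _ _
      _ ≤ ∑ s', P p.1 p.2 s' * B := by
          refine Finset.sum_le_sum fun s' _ => ?_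
          rw [abs_mul, abs_of_nonneg (hP0 p.1 p.2 s')]
          exact mul_le_mul_of_nonneg_left (hfπ s') (hP0 p.1 p.2 s')
      _ = B := by rw [← Finset.sum_mul, hP1, one_mul]
  have hXB : ∀ p, |X p| ≤ B + (Rmax + γ * B) := by
    intro p
    have hRp : |R p.1 p.2| ≤ Rmax := by
      rw [abs_of_nonneg (hR p.1 p.2).1]; exact (hR p.1 p.2).2
    calc |X p| ≤ |f p.1 p.2| + |R p.1 p.2 + γ * Pf p| := abs_sub _ _
      _ ≤ |f p.1 p.2| + (|R p.1 p.2| + |γ * Pf p|) := by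
          gcongr; exact abs_add_le _ _
      _ ≤ B + (Rmax + γ * B) := by
          gcongr
          · exact hf _ _
          · rw [abs_mul, abs_of_nonneg hγ0]
            exact mul_le_mul_of_nonneg_left (hPfB p) hγ0
  -- summabilities
  have hFB : ∀ t, |F t| ≤ B :=
    fun t => weighted_abs_le P π s0 hP0 hπ0 hP1 hπ1 t _ B (fun p => hf p.1 p.2)
  have hRTB : ∀ t, |RT t| ≤ Rmax := by
    intro t
    refine weighted_abs_le P π s0 hP0 hπ0 hP1 hπ1 t _ Rmax (fun p => ?_)
    rw [abs_of_nonneg (hR p.1 p.2).1]; exact (hR p.1 p.2).2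
  have sumF : Summable (fun t => γ ^ t * F t) := summable_geom_mul γ hγ0 hγ1 F B hFB
  have sumRT : Summable (fun t => γ ^ t * RT t) := summable_geom_mul γ hγ0 hγ1 RT Rmax hRTB
  have sumF1 : Summable (fun t => γ ^ (t + 1) * F (t + 1)) := by
    have := sumF.comp_injective (add_left_injective 1)
    simpa [Function.comp_def] using this
  -- key recursion: ∑_p d t p * Pf p = F (t+1)
  have hrec : ∀ t, ∑ p : S × A, d t p * Pf p = F (t + 1) := by
    intro t
    rw [hF]
    simp only [hdef, stepDist]
    conv_rhs => simp only [Finset.sum_mul]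
    conv_rhs => rw [Finset.sum_comm]
    refine Finset.sum_congr rfl fun q _ => ?_
    rw [hPf]
    rw [Finset.mul_sum, Fintype.sum_prod_type]
    refine Finset.sum_congr rfl fun s' _ => ?_
    rw [Finset.mul_sum, Finset.mul_sum]
    refine Finset.sum_congr rfl fun a' _ => ?_
    ring
  -- per-t identity for the occupancy sum
  have hper : ∀ t, ∑ p : S × A, d t p * X p = F t - RT t - γ * F (t + 1) := by
    intro t
    have : ∀ p : S × A, d t p * X p
        = d t p * f p.1 p.2 - d t p * R p.1 p.2 - γ * (d t p * Pf p) := by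
      intro p; rw [hX]; ring
    rw [Finset.sum_congr rfl fun p _ => this p]
    rw [Finset.sum_sub_distrib, Finset.sum_sub_distrib, ← Finset.mul_sum, hrec]
  -- RHS computation
  have hRHS : ∑ p : S × A, dπ p * X p
      = (1 - γ) * ∑' t : ℕ, γ ^ t * ∑ p : S × A, d t p * X p := by
    have hsp : ∀ p : S × A, Summable (fun t => γ ^ t * d t p * X p) := by
      intro p
      have : Summable (fun t => γ ^ t * (d t p * X p)) := by
        refine summable_geom_mul γ hγ0 hγ1 _ |X p| fun t => ?_
        rw [abs_mul, abs_of_nonneg (stepDist_nonneg P π s0 hP0 hπ0 t p)]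
        calc d t p * |X p| ≤ 1 * |X p| :=
              mul_le_mul_of_nonneg_right (stepDist_le_one P π s0 hP0 hπ0 hP1 hπ1 t p)
                (abs_nonneg _)
          _ = |X p| := one_mul _
      simpa [mul_assoc] using this
    calc ∑ p : S × A, dπ p * X p
        = ∑ p : S × A, (1 - γ) * ∑' t : ℕ, γ ^ t * d t p * X p := by
          refine Finset.sum_congr rfl fun p _ => ?_
          rw [hd p, mul_assoc, ← tsum_mul_right]
      _ = (1 - γ) * ∑ p : S × A, ∑' t : ℕ, γ ^ t * d t p * X p := by
          rw [Finset.mul_sum]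
      _ = (1 - γ) * ∑' t : ℕ, ∑ p : S × A, γ ^ t * d t p * X p := by
          rw [Summable.tsum_finsetSum fun p _ => hsp p]
      _ = (1 - γ) * ∑' t : ℕ, γ ^ t * ∑ p : S × A, d t p * X p := by
          congr 1
          refine tsum_congr fun t => ?_
          rw [Finset.mul_sum]
          exact Finset.sum_congr rfl fun p _ => by ring
  -- assemble
  have hγne : (1 : ℝ) - γ ≠ 0 := by linarith
  have hsumX : (∑' t : ℕ, γ ^ t * ∑ p : S × A, d t p * X p)
      = (∑' t : ℕ, γ ^ t * F t) - (∑' t : ℕ, γ ^ t * RT t)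
        - ∑' t : ℕ, γ ^ (t + 1) * F (t + 1) := by
    rw [← Summable.tsum_sub sumF sumRT, ← Summable.tsum_sub (sumF.sub sumRT) sumF1]
    refine tsum_congr fun t => ?_
    rw [hper t]; ring
  have htel : (∑' t : ℕ, γ ^ t * F t) = γ ^ 0 * F 0 + ∑' t : ℕ, γ ^ (t + 1) * F (t + 1) :=
    Summable.tsum_eq_zero_add sumF
  have hF0 : F 0 = ∑ a, π s0 a * f s0 a := by
    rw [hF]
    simp only [hdef, stepDist]
    rw [Fintype.sum_prod_type]
    have h : ∀ s : S, ∑ a : A, (if s = s0 then (1:ℝ) else 0) * π s a * f s a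
        = if s = s0 then ∑ a, π s a * f s a else 0 := by
      intro s
      split
      · simp
      · simp [*]
    simp only [h]
    simp
  rw [hRHS, hsumX, hF0.symm, hJ]
  field_simp
  rw [htel]
  ring
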